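/- Let λ be an n-core and let u ∈ S̃⁰_n be such that u w_λ^{-1} is a cyclically decreasing element of S̃_n and ℓ(u w_λ^{-1}) = ℓ(u) − ℓ(w_λ). Then u w_λ^{-1} lies in the subgroup of S̃_n generated by the simple reflections {s₀, …, s_{n−1}} \ {s_x}, where x = λ₁ − 1 mod n. -/

import Mathlib

open scoped Classical

/-- A partition: an antitone, eventually-zero sequence of row lengths.
Row `0` is the bottom row; `part i` is the length of row `i`. -/
structure YPartition where
  part : ℕ → ℕ
  antitone' : ∀ ⦃i j : ℕ⦄, i ≤ j → part j ≤ part i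
  eventually_zero : ∃ N, ∀ i, N ≤ i → part i = 0

def emptyPartition : YPartition :=
  ⟨fun _ => 0, fun _ _ _ => le_rfl, ⟨0, fun _ _ => rfl⟩⟩

/-- Cells of a partition, 0-indexed: `(i, j)` is in row `i` (from the bottom), column `j`. -/
def cells (p : YPartition) : Set (ℕ × ℕ) := {c | c.2 < p.part c.1}

/-- Containment of partitions. -/
def Included (p q : YPartition) : Prop := ∀ i, p.part i ≤ q.part i

/-- The skew shape `q/p`. -/
def skewCells (q p : YPartition) : Set (ℕ × ℕ) := cells q \ cells p

/-- The content of a cell. -/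
def content (c : ℕ × ℕ) : ℤ := (c.2 : ℤ) - (c.1 : ℤ)

/-- The number of cells of `p` above `(i,j)` in column `j`. -/
noncomputable def legLen (p : YPartition) (i j : ℕ) : ℕ :=
  Nat.card {i' : ℕ // i < i' ∧ j < p.part i'}

/-- The hook length of the cell `(i,j)` of `p`. -/
noncomputable def hookLen (p : YPartition) (i j : ℕ) : ℕ :=
  (p.part i - j) + legLen p i j

/-- An `n`-core: no cell has hook length `n`. -/
def IsCore (n : ℕ) (p : YPartition) : Prop :=
  ∀ i j : ℕ, j < p.part i → hookLen p i j ≠ n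

/-- The degree of an `n`-core: the number of cells with hook length `< n`. -/
noncomputable def degCore (n : ℕ) (p : YPartition) : ℕ :=
  Nat.card {c : ℕ × ℕ // c ∈ cells p ∧ hookLen p c.1 c.2 < n}

/-- The covering relation of the strong (Bruhat) order on `n`-cores. -/
def StrongCover (n : ℕ) (p q : YPartition) : Prop :=
  IsCore n p ∧ IsCore n q ∧ Included p q ∧ degCore n q = degCore n p + 1

/-- `q/p` is a horizontal strip: at most one cell in each column. -/
def IsHorizontalStrip (p q : YPartition) : Prop :=
  Included p q ∧ ∀ i, q.part (i + 1) ≤ p.part i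

/-- The number of cells of a partition. -/
noncomputable def psize (p : YPartition) : ℕ := Nat.card {c : ℕ × ℕ // c ∈ cells p}

/-- The number of cells of the skew shape `q/p`. -/
noncomputable def skewSize (q p : YPartition) : ℕ := Nat.card {c : ℕ × ℕ // c ∈ skewCells q p}

/-- Edgewise adjacency of cells. -/
def AdjCells (c d : ℕ × ℕ) : Prop :=
  (c.1 = d.1 ∧ (c.2 + 1 = d.2 ∨ d.2 + 1 = c.2)) ∨
  (c.2 = d.2 ∧ (c.1 + 1 = d.1 ∨ d.1 + 1 = c.1))

/-- A ribbon: a nonempty edgewise-connected set of cells with no 2×2 block. -/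
def IsRibbon (S : Set (ℕ × ℕ)) : Prop :=
  S.Nonempty ∧
  (∀ c ∈ S, ∀ d ∈ S, Relation.ReflTransGen (fun x y => y ∈ S ∧ AdjCells x y) c d) ∧
  ∀ i j : ℕ, ¬ ((i, j) ∈ S ∧ (i + 1, j) ∈ S ∧ (i, j + 1) ∈ S ∧ (i + 1, j + 1) ∈ S)

/-- `c` is the head (southeasternmost cell) of `S`. -/
def IsHead (S : Set (ℕ × ℕ)) (c : ℕ × ℕ) : Prop :=
  c ∈ S ∧ ∀ d ∈ S, c.1 ≤ d.1 ∧ d.2 ≤ c.2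

/-- `c` is the tail (northwesternmost cell) of `S`. -/
def IsTail (S : Set (ℕ × ℕ)) (c : ℕ × ℕ) : Prop :=
  c ∈ S ∧ ∀ d ∈ S, d.1 ≤ c.1 ∧ c.2 ≤ d.2

/-- `S` is a connected component of `T` which is a ribbon (one of the ribbons of `T`). -/
def IsRibbonComponent (T S : Set (ℕ × ℕ)) : Prop :=
  S ⊆ T ∧ IsRibbon S ∧ ∀ c ∈ S, ∀ d ∈ T, AdjCells c d → d ∈ S

/-- `R(n-1, p) = (p₁ + n - 1, p₁, p₂, …)`. -/
def Rtop (n : ℕ) (p : YPartition) : YPartition where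
  part i := if i = 0 then p.part 0 + (n - 1) else p.part (i - 1)
  antitone' := by
    intro i j hij
    by_cases hj : j = 0
    · have hi : i = 0 := by omega
      simp [hi, hj]
    · by_cases hi : i = 0
      · simp only [hi, if_pos rfl, if_neg hj]
        exact le_trans (p.antitone' (Nat.zero_le _)) (Nat.le_add_right _ _)
      · simp only [if_neg hi, if_neg hj]
        exact p.antitone' (by omega)
  eventually_zero := by
    obtain ⟨N, hN⟩ := p.eventually_zero
    refine ⟨N + 1, fun i hi => ?_⟩
    have hi0 : i ≠ 0 := by omega
    simp only [if_neg hi0]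
    exact hN _ (by omega)

/-- `(λ, ν)` is a horizontal strong `m`-strip. -/
def IsHorizontalStrongStrip (n : ℕ) (lam nu : YPartition) (m : ℕ) : Prop :=
  Included lam nu ∧ m + degCore n nu = (n - 1) + degCore n lam ∧
  ∃ γ : ℕ → YPartition, γ 0 = nu ∧ γ m = Rtop n lam ∧
    ∀ i < m, StrongCover n (γ i) (γ (i + 1)) ∧ (γ i).part 0 < (γ (i + 1)).part 0

/-- A strong `m`-strip from `nu` to `gam` with chain `γ` and content vector `c 1, …, c m`. -/
def IsStrongStrip (n m : ℕ) (nu gam : YPartition) (γ : ℕ → YPartition) (c : ℕ → ℤ) : Prop :=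
  γ 0 = nu ∧ γ m = gam ∧
  (∀ i < m, StrongCover n (γ i) (γ (i + 1)) ∧
    ∃ S, IsRibbonComponent (skewCells (γ (i + 1)) (γ i)) S ∧
      ∃ h, IsHead S h ∧ content h = c (i + 1)) ∧
  ∀ i, 1 ≤ i → i < m → c i < c (i + 1)

/-- Ribbon strong strips (with prescribed target core `Rc` and prescribed column set). -/
def IsRibbonStrongStrip (n : ℕ) (nu Rc : YPartition) (cols : Set ℕ) (m : ℕ) : Prop :=
  ∃ γ : ℕ → YPartition, γ 0 = nu ∧ γ m = Rc ∧
    ∀ i < m, StrongCover n (γ i) (γ (i + 1)) ∧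
      ∃ S, IsRibbonComponent (skewCells (γ (i + 1)) (γ i)) S ∧
        ∃ t, IsTail S t ∧ t.2 ∈ cols

/- ### The affine symmetric group -/

/-- The underlying function of the simple reflection `s_i` of the affine symmetric group. -/
def sFun (n : ℕ) (i k : ℤ) : ℤ :=
  if (k - i) % n = 0 then k + 1 else if (k - i) % n = 1 then k - 1 else k

lemma one_emod_eq (n : ℕ) (hn : 2 ≤ n) : (1 : ℤ) % n = 1 :=
  Int.emod_eq_of_lt (by norm_num) (by exact_mod_cast hn)

lemma sFun_involutive (n : ℕ) (hn : 2 ≤ n) (i : ℤ) : Function.Involutive (sFun n i) := by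
  have h1n := one_emod_eq n hn
  intro k
  by_cases h0 : (k - i) % n = 0
  · have e1 : (k + 1 - i) % n = 1 := by
      have e : k + 1 - i = (k - i) + 1 := by ring
      rw [e, Int.add_emod, h0, h1n]
      simpa using h1n
    have hk : sFun n i k = k + 1 := by simp [sFun, h0]
    rw [hk]
    simp [sFun, e1]
  · by_cases h1 : (k - i) % n = 1
    · have e0 : (k - 1 - i) % n = 0 := by
        have e : k - 1 - i = (k - i) - 1 := by ring
        rw [e, Int.sub_emod, h1, h1n]
        simp
      have hk : sFun n i k = k - 1 := by simp [sFun, h0, h1]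
      rw [hk]
      simp [sFun, e0]
    · have hk : sFun n i k = k := by simp [sFun, h0, h1]
      rw [hk]
      simp [sFun, h0, h1]

/-- The simple reflection `s_i` (depending only on `i mod n`). -/
noncomputable def sRefl (n : ℕ) (hn : 2 ≤ n) (i : ℤ) : Equiv.Perm ℤ :=
  Function.Involutive.toPerm (sFun n i) (sFun_involutive n hn i)

/-- The product `s_{i₁} ⋯ s_{i_ℓ}` of the word `l = [i₁, …, i_ℓ]`. -/
noncomputable def wordProd (n : ℕ) (hn : 2 ≤ n) (l : List ℤ) : Equiv.Perm ℤ :=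
  (l.map (sRefl n hn)).prod

/-- The Coxeter length: minimal length of a word in the simple reflections. -/
noncomputable def alen (n : ℕ) (hn : 2 ≤ n) (w : Equiv.Perm ℤ) : ℕ :=
  sInf {m : ℕ | ∃ l : List ℤ, l.length = m ∧ w = wordProd n hn l}

def IsReducedWord (n : ℕ) (hn : 2 ≤ n) (w : Equiv.Perm ℤ) (l : List ℤ) : Prop :=
  w = wordProd n hn l ∧ l.length = alen n hn w

/-- Membership in the affine symmetric group. -/
def IsAffinePerm (n : ℕ) (w : Equiv.Perm ℤ) : Prop :=
  (∀ k : ℤ, w (k + n) = w k + n) ∧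
  (∑ i ∈ Finset.range n, w ((i : ℤ) + 1)) = ((n : ℤ) * (n + 1)) / 2

/-- Affine Grassmannian elements: minimal-length coset representatives of S̃ₙ/Sₙ. -/
def IsAffGrassmannian (n : ℕ) (hn : 2 ≤ n) (w : Equiv.Perm ℤ) : Prop :=
  IsAffinePerm n w ∧
  ∀ v ∈ Subgroup.closure {g : Equiv.Perm ℤ | ∃ i : ℤ, ¬ ((i : ℤ) % n = 0) ∧ g = sRefl n hn i},
    alen n hn w ≤ alen n hn (w * v)

/-- An addable corner of `p` in row `r` (the cell `(r, p.part r)`). -/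
def AddableCorner (p : YPartition) (r : ℕ) : Prop :=
  r = 0 ∨ p.part r < p.part (r - 1)

/-- The content of the addable corner of `p` in row `r`. -/
def cornerContent (p : YPartition) (r : ℕ) : ℤ := (p.part r : ℤ) - (r : ℤ)

/-- `q = s_i · p` : `q` is obtained from `p` by adding all addable corners of residue `i`. -/
def ActStep (n : ℕ) (i : ℤ) (p q : YPartition) : Prop :=
  (∃ r, AddableCorner p r ∧ (cornerContent p r - i) % n = 0) ∧
  ∀ r, q.part r =
    if AddableCorner p r ∧ (cornerContent p r - i) % n = 0 then p.part r + 1 else p.part r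

/-- `ActList n l p q` : `q = s_{i₁} · (s_{i₂} · ⋯ (s_{i_ℓ} · p))` for `l = [i₁, …, i_ℓ]`. -/
def ActList (n : ℕ) : List ℤ → YPartition → YPartition → Prop
  | [], p, q => q = p
  | i :: l, p, q => ∃ p', ActList n l p p' ∧ ActStep n i p' q

/-- `p = 𝔞(w)`: `p` is obtained by acting on the empty partition by a reduced word of `w`. -/
def ACoreOf (n : ℕ) (hn : 2 ≤ n) (w : Equiv.Perm ℤ) (p : YPartition) : Prop :=
  ∃ l : List ℤ, IsReducedWord n hn w l ∧ ActList n l emptyPartition p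

/-- `w_λ`: the affine Grassmannian element corresponding to the `n`-core `p`. -/
noncomputable def wOf (n : ℕ) (hn : 2 ≤ n) (p : YPartition) : Equiv.Perm ℤ :=
  if h : ∃ w : Equiv.Perm ℤ, IsAffGrassmannian n hn w ∧ ACoreOf n hn w p then h.choose else 1

/-- A cyclically decreasing word: pairwise distinct residues, and `i+1` precedes `i`. -/
def IsCDWord (n : ℕ) (l : List ℤ) : Prop :=
  l.Pairwise (fun a b : ℤ => ¬ ((a - b) % (n : ℤ) = 0) ∧ ¬ ((b - (a + 1)) % (n : ℤ) = 0))

/-- A cyclically decreasing element of the affine symmetric group. -/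
def IsCyclicallyDecreasing (n : ℕ) (hn : 2 ≤ n) (w : Equiv.Perm ℤ) : Prop :=
  ∃ l : List ℤ, IsReducedWord n hn w l ∧ IsCDWord n l

/-- The underlying function of the transposition `τ_{a,b}`. -/
def tauFun (n : ℕ) (a b k : ℤ) : ℤ :=
  if (k - a) % n = 0 then k + (b - a) else if (k - b) % n = 0 then k - (b - a) else k

lemma tauFun_involutive (n : ℕ) (a b : ℤ) (h : ¬ ((b - a) % n = 0)) :
    Function.Involutive (tauFun n a b) := by
  intro k
  by_cases h0 : (k - a) % n = 0
  · have e1 : (k + (b - a) - a) % n = (b - a) % n := by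
      have e : k + (b - a) - a = (k - a) + (b - a) := by ring
      rw [e, Int.add_emod, h0]
      simp [Int.emod_emod_of_dvd]
    have e2 : (k + (b - a) - b) % n = 0 := by
      have e : k + (b - a) - b = k - a := by ring
      rw [e]; exact h0
    have hk : tauFun n a b k = k + (b - a) := by simp [tauFun, h0]
    rw [hk]
    simp [tauFun, e1, e2, h]
  · by_cases h1 : (k - b) % n = 0
    · have e0 : (k - (b - a) - a) % n = 0 := by
        have e : k - (b - a) - a = k - b := by ring
        rw [e]; exact h1
      have hk : tauFun n a b k = k - (b - a) := by simp [tauFun, h0, h1]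
      rw [hk]
      simp [tauFun, e0]
    · have hk : tauFun n a b k = k := by simp [tauFun, h0, h1]
      rw [hk]
      simp [tauFun, h0, h1]

/-- The transposition `τ_{a,b}` of the affine symmetric group (`a ≢ b (mod n)`). -/
noncomputable def tauRefl (n : ℕ) (a b : ℤ) (h : ¬ ((b - a) % n = 0)) : Equiv.Perm ℤ :=
  Function.Involutive.toPerm (tauFun n a b) (tauFun_involutive n a b h)

/- ### The maps p and 𝔠, rectangles -/

/-- `pMap n γ i`: the number of cells in row `i` of `γ` with hook length `< n`. -/
noncomputable def pMap (n : ℕ) (γ : YPartition) (i : ℕ) : ℕ :=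
  Nat.card {j : ℕ // j < γ.part i ∧ hookLen γ i j < n}

/-- The number of parts of `f` that are `≥ t`. -/
noncomputable def numPartsGe (f : ℕ → ℕ) (t : ℕ) : ℕ := Nat.card {i : ℕ // t ≤ f i}

/-- The rectangle `R_r = (r^(n-r))`. -/
def rectPartition (n r : ℕ) : YPartition where
  part i := if i < n - r then r else 0
  antitone' := by
    intro i j hij
    by_cases hj : j < n - r
    · simp [hj, show i < n - r by omega]
    · simp [hj]
  eventually_zero := ⟨n - r, fun i hi => by simp [Nat.not_lt.mpr hi]⟩

/-- The product `v r * v (r-1) * ⋯ * v 1`. -/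
noncomputable def revProd (v : ℕ → Equiv.Perm ℤ) : ℕ → Equiv.Perm ℤ
  | 0 => 1
  | j + 1 => v (j + 1) * revProd v j

namespace AuxCD

lemma perm_apply_inv_self {α : Type*} (w : Equiv.Perm α) (z : α) : w (w⁻¹ z) = z :=
  w.apply_symm_apply z

lemma perm_inv_apply_self {α : Type*} (w : Equiv.Perm α) (z : α) : w⁻¹ (w z) = z :=
  w.symm_apply_apply z

lemma npos {n : ℕ} (hn : 2 ≤ n) : (0:ℤ) < (n:ℤ) := by
  have : (0:ℕ) < n := by omega
  exact_mod_cast this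

lemma dvd0 {n : ℕ} {a : ℤ} : a % (n:ℤ) = 0 ↔ (n:ℤ) ∣ a := Int.dvd_iff_emod_eq_zero.symm

lemma mod_eq_one {n : ℕ} (hn : 2 ≤ n) {a : ℤ} (h : (n:ℤ) ∣ (a - 1)) : a % (n:ℤ) = 1 := by
  obtain ⟨c, hc⟩ := h
  have ha : a = 1 + (n:ℤ)*c := by linarith
  rw [ha, Int.add_mul_emod_self_left, one_emod_eq n hn]

lemma mod_one_dvd {n : ℕ} {a : ℤ} (h : a % (n:ℤ) = 1) : (n:ℤ) ∣ (a - 1) := by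
  have h2 := Int.emod_add_mul_ediv a (n:ℤ)
  exact ⟨a / (n:ℤ), by omega⟩

lemma not_both {n : ℕ} (hn : 2 ≤ n) {a : ℤ} (h0 : (n:ℤ) ∣ a) (h1 : (n:ℤ) ∣ (a - 1)) : False := by
  have : (n:ℤ) ∣ 1 := by
    have := dvd_sub h0 h1
    simpa using this
  have h2 := Int.le_of_dvd (by norm_num) this
  have := npos hn
  omega

lemma sFun_add {n : ℕ} {i k : ℤ} (h : (n:ℤ) ∣ (k - i)) : sFun n i k = k + 1 := by
  simp [sFun, dvd0.mpr h]

lemma sFun_sub {n : ℕ} (hn : 2 ≤ n) {i k : ℤ} (h : (n:ℤ) ∣ (k - i - 1)) : sFun n i k = k - 1 := by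
  have h1 : (k - i) % (n:ℤ) = 1 := mod_eq_one hn (by simpa using h)
  have h0 : ¬ (k - i) % (n:ℤ) = 0 := by rw [h1]; norm_num
  simp [sFun, h0, h1]

lemma sFun_fix {n : ℕ} {i k : ℤ} (h0 : ¬ (n:ℤ) ∣ (k - i)) (h1 : ¬ (n:ℤ) ∣ (k - i - 1)) :
    sFun n i k = k := by
  have h0' : ¬ (k - i) % (n:ℤ) = 0 := fun hh => h0 (dvd0.mp hh)
  have h1' : ¬ (k - i) % (n:ℤ) = 1 := fun hh => h1 (mod_one_dvd hh)
  simp [sFun, h0', h1']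

lemma sFun_cases {n : ℕ} (hn : 2 ≤ n) (i k : ℤ) :
    ((n:ℤ) ∣ (k - i) ∧ sFun n i k = k + 1) ∨ ((n:ℤ) ∣ (k - i - 1) ∧ sFun n i k = k - 1) ∨
      (¬ (n:ℤ) ∣ (k - i) ∧ ¬ (n:ℤ) ∣ (k - i - 1) ∧ sFun n i k = k) := by
  by_cases h0 : (n:ℤ) ∣ (k - i)
  · exact Or.inl ⟨h0, sFun_add h0⟩
  · by_cases h1 : (n:ℤ) ∣ (k - i - 1)
    · exact Or.inr (Or.inl ⟨h1, sFun_sub hn h1⟩)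
    · exact Or.inr (Or.inr ⟨h0, h1, sFun_fix h0 h1⟩)

lemma sRefl_apply {n : ℕ} (hn : 2 ≤ n) (i k : ℤ) : sRefl n hn i k = sFun n i k := rfl

lemma sRefl_sq {n : ℕ} (hn : 2 ≤ n) (i : ℤ) : sRefl n hn i * sRefl n hn i = 1 :=
  Equiv.ext fun k => sFun_involutive n hn i k

lemma sRefl_inv {n : ℕ} (hn : 2 ≤ n) (i : ℤ) : (sRefl n hn i)⁻¹ = sRefl n hn i := by
  rw [inv_eq_iff_mul_eq_one]; exact sRefl_sq hn i

/-- Periodicity: `w (k + n) = w k + n`. -/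
def Per (n : ℕ) (w : Equiv.Perm ℤ) : Prop := ∀ k : ℤ, w (k + (n:ℤ)) = w k + (n:ℤ)

lemma per_one {n : ℕ} : Per n 1 := fun _ => rfl

lemma per_sFun {n : ℕ} (hn : 2 ≤ n) (i k : ℤ) : sFun n i (k + (n:ℤ)) = sFun n i k + (n:ℤ) := by
  have e : (k + (n:ℤ) - i) % (n:ℤ) = (k - i) % (n:ℤ) := by
    rw [show k + (n:ℤ) - i = (k - i) + (n:ℤ)*1 by ring, Int.add_mul_emod_self_left]
  simp only [sFun, e]
  split_ifs <;> ring

lemma per_sRefl {n : ℕ} (hn : 2 ≤ n) (i : ℤ) : Per n (sRefl n hn i) := fun k => per_sFun hn i k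

lemma per_mul {n : ℕ} {u v : Equiv.Perm ℤ} (hu : Per n u) (hv : Per n v) : Per n (u * v) := by
  intro k
  show u (v (k + (n:ℤ))) = u (v k) + (n:ℤ)
  rw [hv k, hu (v k)]

lemma per_inv {n : ℕ} {u : Equiv.Perm ℤ} (hu : Per n u) : Per n u⁻¹ := by
  intro k
  apply u.injective
  rw [perm_apply_inv_self, hu (u⁻¹ k), perm_apply_inv_self]

lemma per_wordProd {n : ℕ} (hn : 2 ≤ n) (l : List ℤ) : Per n (wordProd n hn l) := by
  induction l with
  | nil => exact per_one
  | cons i t ih =>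
      have : wordProd n hn (i :: t) = sRefl n hn i * wordProd n hn t := by simp [wordProd]
      rw [this]; exact per_mul (per_sRefl hn i) ih

lemma per_shift_nat {n : ℕ} {w : Equiv.Perm ℤ} (hw : Per n w) (k : ℤ) (m : ℕ) :
    w (k + (n:ℤ)*(m:ℤ)) = w k + (n:ℤ)*(m:ℤ) := by
  induction m with
  | zero => simp
  | succ m ih =>
      have ec : ((m+1:ℕ):ℤ) = (m:ℤ)+1 := by push_cast; ring
      have e : k + (n:ℤ)*((m:ℤ)+1) = (k + (n:ℤ)*(m:ℤ)) + (n:ℤ) := by ring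
      rw [ec, e, hw, ih]; ring

lemma per_shift {n : ℕ} {w : Equiv.Perm ℤ} (hw : Per n w) (k t : ℤ) :
    w (k + (n:ℤ) * t) = w k + (n:ℤ) * t := by
  rcases le_or_gt 0 t with h | h
  · obtain ⟨m, rfl⟩ := Int.eq_ofNat_of_zero_le h
    exact per_shift_nat hw k m
  · obtain ⟨m, hm⟩ : ∃ m : ℕ, (m:ℤ) = -t := ⟨(-t).toNat, Int.toNat_of_nonneg (by omega)⟩
    have h2 := per_shift_nat hw (k + (n:ℤ)*t) m
    rw [hm] at h2
    have e : k + (n:ℤ)*t + (n:ℤ)*(-t) = k := by ring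
    rw [e] at h2
    have e2 : (n:ℤ)*(-t) = -((n:ℤ)*t) := by ring
    rw [e2] at h2
    linarith

lemma wordProd_cons {n : ℕ} (hn : 2 ≤ n) (i : ℤ) (l : List ℤ) :
    wordProd n hn (i :: l) = sRefl n hn i * wordProd n hn l := by simp [wordProd]

lemma wordProd_append {n : ℕ} (hn : 2 ≤ n) (l₁ l₂ : List ℤ) :
    wordProd n hn (l₁ ++ l₂) = wordProd n hn l₁ * wordProd n hn l₂ := by simp [wordProd]

lemma wordProd_reverse {n : ℕ} (hn : 2 ≤ n) (l : List ℤ) :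
    wordProd n hn l.reverse = (wordProd n hn l)⁻¹ := by
  induction l with
  | nil => simp [wordProd]
  | cons i t ih =>
      rw [List.reverse_cons, wordProd_append hn, ih,
        show wordProd n hn (i::t) = sRefl n hn i * wordProd n hn t from wordProd_cons hn i t,
        mul_inv_rev, sRefl_inv]
      congr 1

/-- Expressibility as a word in the generators. -/
def Expr (n : ℕ) (hn : 2 ≤ n) (w : Equiv.Perm ℤ) : Prop := ∃ l, w = wordProd n hn l

lemma expr_one {n : ℕ} (hn : 2 ≤ n) : Expr n hn 1 := ⟨[], rfl⟩

lemma expr_mul {n : ℕ} {hn : 2 ≤ n} {u v : Equiv.Perm ℤ} (hu : Expr n hn u) (hv : Expr n hn v) :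
    Expr n hn (u * v) := by
  obtain ⟨l₁, h₁⟩ := hu; obtain ⟨l₂, h₂⟩ := hv
  exact ⟨l₁ ++ l₂, by rw [wordProd_append, h₁, h₂]⟩

lemma expr_inv {n : ℕ} {hn : 2 ≤ n} {u : Equiv.Perm ℤ} (hu : Expr n hn u) : Expr n hn u⁻¹ := by
  obtain ⟨l, h⟩ := hu
  exact ⟨l.reverse, by rw [wordProd_reverse, h]⟩

lemma alen_le {n : ℕ} {hn : 2 ≤ n} {w : Equiv.Perm ℤ} {l : List ℤ} (h : w = wordProd n hn l) :
    alen n hn w ≤ l.length := Nat.sInf_le ⟨l, rfl, h⟩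

lemma alen_attained {n : ℕ} {hn : 2 ≤ n} {w : Equiv.Perm ℤ} (h : Expr n hn w) :
    ∃ l, w = wordProd n hn l ∧ l.length = alen n hn w := by
  obtain ⟨l, hl⟩ := h
  have hne : {m : ℕ | ∃ l : List ℤ, l.length = m ∧ w = wordProd n hn l}.Nonempty :=
    ⟨l.length, l, rfl, hl⟩
  obtain ⟨l', hl', hw'⟩ := Nat.sInf_mem hne
  exact ⟨l', hw', hl'⟩

lemma alen_one {n : ℕ} (hn : 2 ≤ n) : alen n hn 1 = 0 :=
  Nat.le_zero.mp (alen_le (n := n) (hn := hn) (l := []) rfl)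

lemma alen_mul_le {n : ℕ} {hn : 2 ≤ n} {u v : Equiv.Perm ℤ} (hu : Expr n hn u) (hv : Expr n hn v) :
    alen n hn (u * v) ≤ alen n hn u + alen n hn v := by
  obtain ⟨l₁, h₁, e₁⟩ := alen_attained hu
  obtain ⟨l₂, h₂, e₂⟩ := alen_attained hv
  have : u * v = wordProd n hn (l₁ ++ l₂) := by rw [wordProd_append, h₁, h₂]
  calc alen n hn (u * v) ≤ (l₁ ++ l₂).length := alen_le this
    _ = alen n hn u + alen n hn v := by rw [List.length_append, e₁, e₂]

/-! ### Inversion counting -/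

/-- The inversion set of a periodic permutation. -/
def auxI (n : ℕ) (w : Equiv.Perm ℤ) : Set (ℤ × ℤ) :=
  {p | 1 ≤ p.1 ∧ p.1 ≤ (n:ℤ) ∧ p.1 < p.2 ∧ w p.2 < w p.1}

noncomputable def ainv (n : ℕ) (w : Equiv.Perm ℤ) : ℕ := (auxI n w).ncard

lemma win_shift {n : ℕ} (hn : 2 ≤ n) (a : ℤ) :
    ∃ t : ℤ, 1 ≤ a + (n:ℤ)*t ∧ a + (n:ℤ)*t ≤ (n:ℤ) := by
  have h0 : (0:ℤ) < (n:ℤ) := npos hn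
  refine ⟨-((a-1)/(n:ℤ)), ?_, ?_⟩
  · have := Int.emod_def (a-1) (n:ℤ)
    have h1 : (0:ℤ) ≤ (a-1) % (n:ℤ) := Int.emod_nonneg _ (by omega)
    have h2 : a + (n:ℤ)*(-((a-1)/(n:ℤ))) = (a-1) % (n:ℤ) + 1 := by
      rw [Int.emod_def]; ring
    omega
  · have h1 : (a-1) % (n:ℤ) < (n:ℤ) := Int.emod_lt_of_pos _ h0
    have h2 : a + (n:ℤ)*(-((a-1)/(n:ℤ))) = (a-1) % (n:ℤ) + 1 := by
      rw [Int.emod_def]; ring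
    omega

lemma eq_of_dvd_window {n : ℕ} (hn : 2 ≤ n) {a b : ℤ} (ha1 : 1 ≤ a) (ha2 : a ≤ (n:ℤ))
    (hb1 : 1 ≤ b) (hb2 : b ≤ (n:ℤ)) (hd : (n:ℤ) ∣ (a - b)) : a = b := by
  rcases hd with ⟨k, hk⟩
  have h0 : (0:ℤ) < (n:ℤ) := npos hn
  have hk0 : k = 0 := by
    rcases lt_trichotomy k 0 with h | h | h
    · have h5 : (n:ℤ)*k ≤ (n:ℤ)*(-1) := mul_le_mul_of_nonneg_left (by omega) (by omega)
      have h6 : (n:ℤ)*(-1) = -(n:ℤ) := by ring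
      linarith
    · exact h
    · have h5 : (n:ℤ)*1 ≤ (n:ℤ)*k := mul_le_mul_of_nonneg_left (by omega) (by omega)
      have h6 : (n:ℤ)*1 = (n:ℤ) := by ring
      linarith
  rw [hk0] at hk
  omega

lemma auxI_finite {n : ℕ} (hn : 2 ≤ n) {w : Equiv.Perm ℤ} (hw : Per n w) :
    (auxI n w).Finite := by
  have h0 : (0:ℤ) < (n:ℤ) := npos hn
  have hne : (Finset.Icc (1:ℤ) (n:ℤ)).Nonempty := ⟨1, by simp; omega⟩
  set minW := (Finset.Icc (1:ℤ) (n:ℤ)).inf' hne w with hminW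
  set maxW := (Finset.Icc (1:ℤ) (n:ℤ)).sup' hne w with hmaxW
  apply Set.Finite.subset ((Set.finite_Icc (1:ℤ) (n:ℤ)).prod
    (Set.finite_Icc (1:ℤ) ((n:ℤ) + maxW - minW)))
  rintro ⟨a, b⟩ ⟨h1, h2, h3, h4⟩
  have h1' : 1 ≤ a := h1
  have h2' : a ≤ (n:ℤ) := h2
  have h3' : a < b := h3
  have h4' : w b < w a := h4
  clear h1 h2 h3 h4
  constructor
  · exact ⟨h1', h2'⟩
  · simp only [Set.mem_Icc]
    have hq0 : 0 ≤ (b-1)/(n:ℤ) := Int.ediv_nonneg (by omega) (by omega)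
    have hrb : b = ((b-1) % (n:ℤ) + 1) + (n:ℤ)*((b-1)/(n:ℤ)) := by
      rw [Int.emod_def]; ring
    have hr1 : 1 ≤ (b-1) % (n:ℤ) + 1 := by
      have := Int.emod_nonneg (b-1) (show (n:ℤ) ≠ 0 by omega); omega
    have hr2 : (b-1) % (n:ℤ) + 1 ≤ (n:ℤ) := by
      have := Int.emod_lt_of_pos (b-1) h0; omega
    have hwb : w b = w ((b-1) % (n:ℤ) + 1) + (n:ℤ)*((b-1)/(n:ℤ)) := by
      conv_lhs => rw [hrb]
      rw [per_shift hw]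
    have hminr : minW ≤ w ((b-1) % (n:ℤ) + 1) :=
      Finset.inf'_le w (by rw [Finset.mem_Icc]; omega)
    have hmaxa : w a ≤ maxW := Finset.le_sup' w (by rw [Finset.mem_Icc]; omega)
    omega

lemma sFun_strict {n : ℕ} (hn : 2 ≤ n) (i : ℤ) {y z : ℤ} (hyz : y < z)
    (hexc : ¬ ((n:ℤ) ∣ (y - i) ∧ z = y + 1)) : sFun n i y < sFun n i z := by
  have hn2 : (2:ℤ) ≤ (n:ℤ) := by exact_mod_cast hn
  rcases sFun_cases hn i y with ⟨dy, ey⟩ | ⟨dy, ey⟩ | ⟨dy0, dy1, ey⟩ <;>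
    rcases sFun_cases hn i z with ⟨dz, ez⟩ | ⟨dz, ez⟩ | ⟨dz0, dz1, ez⟩ <;>
      rw [ey, ez]
  all_goals first
    | omega
    | (have hne : z ≠ y + 1 := fun hez => hexc ⟨dy, hez⟩
       omega)
    | (have hne : z ≠ y + 1 := by
         intro hez
         exact dy0 (by rw [show y - i = z - i - 1 by omega]; exact dz)
       omega)
    | (have hd : (n:ℤ) ∣ (z - y - 1) := by
         rw [show z - y - 1 = (z - i - 1) - (y - i) by ring]
         exact dvd_sub dz dy
       have hne : z ≠ y + 1 := fun hez => hexc ⟨dy, hez⟩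
       have hpos : 0 < z - y - 1 := by omega
       have hle := Int.le_of_dvd hpos hd
       omega)

lemma mul_sRefl_apply {n : ℕ} (hn : 2 ≤ n) (i : ℤ) (w : Equiv.Perm ℤ) (k : ℤ) :
    (sRefl n hn i * w) k = sFun n i (w k) := rfl

lemma auxI_mul_ascent {n : ℕ} (hn : 2 ≤ n) {w : Equiv.Perm ℤ} (hw : Per n w) {i : ℤ}
    (h : w⁻¹ i < w⁻¹ (i+1)) :
    ∃ q : ℤ × ℤ, q ∉ auxI n w ∧ auxI n (sRefl n hn i * w) = insert q (auxI n w) := by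
  have hwi : Per n w⁻¹ := per_inv hw
  set a0 := w⁻¹ i with ha0
  set b0 := w⁻¹ (i+1) with hb0
  obtain ⟨T, hT1, hT2⟩ := win_shift hn a0
  set aT := a0 + (n:ℤ)*T with haT
  set bT := b0 + (n:ℤ)*T with hbT
  have hwaT : w aT = i + (n:ℤ)*T := by
    rw [haT, per_shift hw, ha0, perm_apply_inv_self]
  have hwbT : w bT = (i+1) + (n:ℤ)*T := by
    rw [hbT, per_shift hw, hb0, perm_apply_inv_self]
  have hinva : ∀ t : ℤ, w⁻¹ (i + (n:ℤ)*t) = a0 + (n:ℤ)*t := fun t => per_shift hwi i t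
  have hinvb : ∀ t : ℤ, w⁻¹ (i + 1 + (n:ℤ)*t) = b0 + (n:ℤ)*t := fun t => per_shift hwi (i+1) t
  refine ⟨(aT, bT), ?_, ?_⟩
  · rintro ⟨-, -, -, h4⟩
    rw [hwaT, hwbT] at h4
    omega
  · ext ⟨a, b⟩
    simp only [auxI, Set.mem_setOf_eq, Set.mem_insert_iff, Prod.mk.injEq,
      mul_sRefl_apply hn]
    constructor
    · rintro ⟨h1, h2, h3, h4⟩
      by_cases hin : w b < w a
      · exact Or.inr ⟨h1, h2, h3, hin⟩
      · left
        have hne : w a ≠ w b := fun hh => absurd (w.injective hh) (by omega)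
        have hlt : w a < w b := by omega
        by_cases hexc : (n:ℤ) ∣ (w a - i) ∧ w b = w a + 1
        · obtain ⟨⟨s, hs⟩, hab⟩ := hexc
          have hwa : w a = i + (n:ℤ)*s := by omega
          have hwb : w b = i + 1 + (n:ℤ)*s := by omega
          have hae : a = a0 + (n:ℤ)*s := by
            have h5 := hinva s
            rw [← hwa, perm_inv_apply_self] at h5
            exact h5
          have hbe : b = b0 + (n:ℤ)*s := by
            have h5 := hinvb s
            rw [← hwb, perm_inv_apply_self] at h5
            exact h5
          have hsT : s = T := by
            have hd : (n:ℤ) ∣ (a - aT) := ⟨s - T, by rw [hae, haT]; ring⟩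
            have := eq_of_dvd_window hn h1 h2 hT1 hT2 hd
            have hnz : (n:ℤ) ≠ 0 := by have := npos hn; omega
            have : (n:ℤ)*s = (n:ℤ)*T := by omega
            exact mul_left_cancel₀ hnz this
          subst hsT
          exact ⟨by omega, by omega⟩
        · exact absurd (sFun_strict hn i hlt hexc) (by omega)
    · rintro (⟨rfl, rfl⟩ | ⟨h1, h2, h3, h4⟩)
      · refine ⟨hT1, hT2, by omega, ?_⟩
        have e1 : sFun n i (i + 1 + (n:ℤ)*T) = i + (n:ℤ)*T := by
          rw [sFun_sub hn (i := i) (k := i + 1 + (n:ℤ)*T) ⟨T, by ring⟩]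
          ring
        have e2 : sFun n i (i + (n:ℤ)*T) = i + (n:ℤ)*T + 1 :=
          sFun_add ⟨T, by ring⟩
        rw [hwaT, hwbT, e1, e2]
        omega
      · refine ⟨h1, h2, h3, ?_⟩
        apply sFun_strict hn i h4
        rintro ⟨⟨s, hs⟩, hab⟩
        have hwb : w b = i + (n:ℤ)*s := by omega
        have hwa : w a = i + 1 + (n:ℤ)*s := by omega
        have hbe : b = a0 + (n:ℤ)*s := by
          have h5 := hinva s
          rw [← hwb, perm_inv_apply_self] at h5
          exact h5
        have hae : a = b0 + (n:ℤ)*s := by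
          have h5 := hinvb s
          rw [← hwa, perm_inv_apply_self] at h5
          exact h5
        omega

lemma ainv_ascent {n : ℕ} (hn : 2 ≤ n) {w : Equiv.Perm ℤ} (hw : Per n w) {i : ℤ}
    (h : w⁻¹ i < w⁻¹ (i+1)) :
    ainv n (sRefl n hn i * w) = ainv n w + 1 := by
  obtain ⟨q, hq, heq⟩ := auxI_mul_ascent hn hw h
  rw [ainv, ainv, heq, Set.ncard_insert_of_notMem hq (auxI_finite hn hw)]

lemma ainv_descent {n : ℕ} (hn : 2 ≤ n) {w : Equiv.Perm ℤ} (hw : Per n w) {i : ℤ}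
    (h : w⁻¹ (i+1) < w⁻¹ i) :
    ainv n w = ainv n (sRefl n hn i * w) + 1 := by
  set w' := sRefl n hn i * w with hw'def
  have hw' : Per n w' := per_mul (per_sRefl hn i) hw
  have e1 : w'⁻¹ i = w⁻¹ (i+1) := by
    rw [hw'def, mul_inv_rev, sRefl_inv]
    show w⁻¹ (sRefl n hn i i) = _
    rw [sRefl_apply, sFun_add ⟨0, by ring⟩]
  have e2 : w'⁻¹ (i+1) = w⁻¹ i := by
    rw [hw'def, mul_inv_rev, sRefl_inv]
    show w⁻¹ (sRefl n hn i (i+1)) = _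
    rw [sRefl_apply, sFun_sub hn ⟨0, by ring⟩]
    norm_num
  have h' : w'⁻¹ i < w'⁻¹ (i+1) := by rw [e1, e2]; exact h
  have hstep := ainv_ascent hn hw' h'
  rw [show sRefl n hn i * w' = w from by rw [hw'def, ← mul_assoc, sRefl_sq, one_mul]] at hstep
  omega

lemma auxI_one {n : ℕ} : auxI n 1 = ∅ := by
  ext ⟨a, b⟩
  simp only [auxI, Set.mem_setOf_eq, Set.mem_empty_iff_false, iff_false]
  rintro ⟨-, -, h3, h4⟩
  simp only [Equiv.Perm.one_apply] at h4
  omega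

lemma ainv_one {n : ℕ} : ainv n 1 = 0 := by rw [ainv, auxI_one, Set.ncard_empty]

lemma ainv_le_length {n : ℕ} (hn : 2 ≤ n) (l : List ℤ) :
    ainv n (wordProd n hn l) ≤ l.length := by
  induction l with
  | nil => simp [wordProd, ainv_one]
  | cons i t ih =>
      rw [wordProd_cons hn]
      set w' := wordProd n hn t
      have hw' : Per n w' := per_wordProd hn t
      rcases lt_trichotomy (w'⁻¹ i) (w'⁻¹ (i+1)) with hlt | heq | hgt
      · rw [ainv_ascent hn hw' hlt]; simpa using ih
      · exact absurd (w'⁻¹.injective heq) (by omega)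
      · have := ainv_descent hn hw' hgt
        simp only [List.length_cons]
        omega

/-- The sum normalization over a window. -/
def SumOK (n : ℕ) (w : Equiv.Perm ℤ) : Prop :=
  ∑ k ∈ Finset.Icc (1:ℤ) (n:ℤ), w k = ∑ k ∈ Finset.Icc (1:ℤ) (n:ℤ), k

lemma unique_window_residue {n : ℕ} (hn : 2 ≤ n) {w : Equiv.Perm ℤ} (hw : Per n w) (r : ℤ) :
    ∃! k, k ∈ Finset.Icc (1:ℤ) (n:ℤ) ∧ (n:ℤ) ∣ (w k - r) := by
  obtain ⟨t, ht1, ht2⟩ := win_shift hn (w⁻¹ r)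
  refine ⟨w⁻¹ r + (n:ℤ)*t, ⟨by rw [Finset.mem_Icc]; omega, ?_⟩, ?_⟩
  · rw [per_shift hw, perm_apply_inv_self]
    exact ⟨t, by ring⟩
  · rintro k ⟨hk, ⟨s, hks⟩⟩
    simp only [Finset.mem_Icc] at hk
    have hke : k = w⁻¹ r + (n:ℤ)*s := by
      have h5 := per_shift (per_inv hw) r s
      rw [show r + (n:ℤ)*s = w k from by omega, perm_inv_apply_self] at h5
      exact h5
    apply eq_of_dvd_window hn hk.1 hk.2 ht1 ht2
    exact ⟨s - t, by rw [hke]; ring⟩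

lemma sum_mul_sRefl {n : ℕ} (hn : 2 ≤ n) (i : ℤ) {w : Equiv.Perm ℤ} (hw : Per n w) :
    ∑ k ∈ Finset.Icc (1:ℤ) (n:ℤ), (sRefl n hn i * w) k
      = ∑ k ∈ Finset.Icc (1:ℤ) (n:ℤ), w k := by
  have hterm : ∀ k, (sRefl n hn i * w) k
      = w k + ((if (n:ℤ) ∣ (w k - i) then (1:ℤ) else 0) -
               (if (n:ℤ) ∣ (w k - i - 1) then (1:ℤ) else 0)) := by
    intro k
    rw [mul_sRefl_apply hn]
    rcases sFun_cases hn i (w k) with ⟨d, e⟩ | ⟨d, e⟩ | ⟨d0, d1, e⟩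
    · rw [e, if_pos d, if_neg (fun d1 => not_both hn d d1)]; ring
    · rw [e, if_neg (fun d0 => not_both hn d0 d), if_pos d]; ring
    · rw [e, if_neg d0, if_neg d1]; ring
  simp only [hterm]
  rw [Finset.sum_add_distrib, Finset.sum_sub_distrib]
  have c1 : ∑ k ∈ Finset.Icc (1:ℤ) (n:ℤ), (if (n:ℤ) ∣ (w k - i) then (1:ℤ) else 0) = 1 := by
    obtain ⟨k₀, hk₀, huniq⟩ := unique_window_residue hn hw i
    rw [Finset.sum_boole]
    rw [show (Finset.Icc (1:ℤ) (n:ℤ)).filter (fun k => (n:ℤ) ∣ (w k - i)) = {k₀} from ?_]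
    · simp
    · apply Finset.eq_singleton_iff_unique_mem.mpr
      constructor
      · rw [Finset.mem_filter]; exact hk₀
      · intro x hx; rw [Finset.mem_filter] at hx; exact huniq x hx
  have c2 : ∑ k ∈ Finset.Icc (1:ℤ) (n:ℤ), (if (n:ℤ) ∣ (w k - i - 1) then (1:ℤ) else 0) = 1 := by
    obtain ⟨k₀, hk₀, huniq⟩ := unique_window_residue hn hw (i+1)
    rw [Finset.sum_boole]
    rw [show (Finset.Icc (1:ℤ) (n:ℤ)).filter (fun k => (n:ℤ) ∣ (w k - i - 1)) = {k₀} from ?_]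
    · simp
    · apply Finset.eq_singleton_iff_unique_mem.mpr
      constructor
      · rw [Finset.mem_filter]
        refine ⟨hk₀.1, by rw [show w k₀ - i - 1 = w k₀ - (i+1) by ring]; exact hk₀.2⟩
      · intro x hx
        rw [Finset.mem_filter] at hx
        exact huniq x ⟨hx.1, by rw [show w x - (i+1) = w x - i - 1 by ring]; exact hx.2⟩
  rw [c1, c2]
  ring

lemma sumOK_wordProd {n : ℕ} (hn : 2 ≤ n) (l : List ℤ) : SumOK n (wordProd n hn l) := by
  induction l with
  | nil => rfl
  | cons i t ih =>
      rw [SumOK, wordProd_cons hn, sum_mul_sRefl hn i (per_wordProd hn t)]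
      exact ih

lemma shift_of_adjacent {w : Equiv.Perm ℤ} (h : ∀ k, w k < w (k+1)) : ∀ k, w k = k + w 0 := by
  have hmono : StrictMono w := strictMono_int_of_lt_succ h
  have hstep : ∀ k, w (k + 1) = w k + 1 := by
    intro k
    by_contra hne
    have h1 : w k + 2 ≤ w (k+1) := by have := h k; omega
    obtain ⟨m, hm⟩ := w.surjective (w k + 1)
    rcases le_or_gt m k with hmk | hmk
    · have := hmono.le_iff_le.mpr hmk
      omega
    · have : w (k+1) ≤ w m := hmono.le_iff_le.mpr (by omega)
      omega
  intro k
  induction k using Int.induction_on with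
  | zero => ring
  | succ m ih => rw [hstep, ih]; ring
  | pred m ih =>
      have := hstep (-(m:ℤ) - 1)
      rw [show -(m:ℤ) - 1 + 1 = -(m:ℤ) by ring] at this
      omega

lemma card_Icc_window {n : ℕ} : (Finset.Icc (1:ℤ) (n:ℤ)).card = n := by
  rw [Int.card_Icc]
  simp

lemma eq_one_of_shift {n : ℕ} (hn : 2 ≤ n) {w : Equiv.Perm ℤ} (hsum : SumOK n w)
    (hshift : ∀ k, w k = k + w 0) : w = 1 := by
  have hc : w 0 = 0 := by
    have h1 : ∑ k ∈ Finset.Icc (1:ℤ) (n:ℤ), w k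
        = ∑ k ∈ Finset.Icc (1:ℤ) (n:ℤ), (k + w 0) := by
      apply Finset.sum_congr rfl
      intro k _
      exact hshift k
    rw [Finset.sum_add_distrib, Finset.sum_const, card_Icc_window] at h1
    have h2 := hsum
    rw [SumOK] at h2
    have h3 : (n • w 0 : ℤ) = (n:ℤ) * w 0 := nsmul_eq_mul n (w 0)
    have h4 : (n:ℤ) * w 0 = 0 := by omega
    rcases mul_eq_zero.mp h4 with h | h
    · exfalso; have := npos hn; omega
    · exact h
  apply Equiv.ext
  intro k
  rw [hshift k, hc]
  simp

lemma exists_descent {n : ℕ} (hn : 2 ≤ n) {w : Equiv.Perm ℤ} (hw : Per n w)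
    (hsum : SumOK n w) (hne : w ≠ 1) : ∃ i : ℤ, w⁻¹ (i+1) < w⁻¹ i := by
  by_contra hno
  push_neg at hno
  have hadj : ∀ k, w⁻¹ k < w⁻¹ (k+1) := by
    intro k
    have h1 := hno k
    have h2 : w⁻¹ k ≠ w⁻¹ (k+1) := fun hh => absurd (w⁻¹.injective hh) (by omega)
    omega
  have hshift := shift_of_adjacent hadj
  apply hne
  have hwinv : ∀ k, w k = k - w⁻¹ 0 := by
    intro k
    have := hshift (w k)
    rw [perm_inv_apply_self] at this
    omega
  have hshift' : ∀ k, w k = k + w 0 := by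
    intro k
    rw [hwinv k, hwinv 0]
    ring
  exact eq_one_of_shift hn hsum hshift'

lemma alen_le_ainv {n : ℕ} (hn : 2 ≤ n) {w : Equiv.Perm ℤ} (hw : Per n w)
    (hsum : SumOK n w) (hexpr : Expr n hn w) : alen n hn w ≤ ainv n w := by
  generalize hm : ainv n w = m
  induction m using Nat.strong_induction_on generalizing w with
  | _ m ih =>
    by_cases hone : w = 1
    · rw [hone, alen_one]; omega
    · obtain ⟨i, hi⟩ := exists_descent hn hw hsum hone
      set w' := sRefl n hn i * w with hw'def
      have hww' : w = sRefl n hn i * w' := by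
        rw [hw'def, ← mul_assoc, sRefl_sq, one_mul]
      have hd := ainv_descent hn hw hi
      rw [← hw'def] at hd
      have hw'per : Per n w' := per_mul (per_sRefl hn i) hw
      have hw'sum : SumOK n w' := by
        rw [SumOK, hw'def, sum_mul_sRefl hn i hw]
        exact hsum
      have hw'expr : Expr n hn w' := expr_mul ⟨[i], by simp [wordProd]⟩ hexpr
      have hlt : ainv n w' < m := by omega
      have ihw := ih (ainv n w') hlt hw'per hw'sum hw'expr rfl
      obtain ⟨l', hl', hlen'⟩ := alen_attained hw'expr
      have : w = wordProd n hn (i :: l') := by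
        rw [wordProd_cons hn, ← hl', ← hww']
      have := alen_le this
      simp only [List.length_cons] at this
      omega

lemma ainv_le_alen {n : ℕ} (hn : 2 ≤ n) {w : Equiv.Perm ℤ} (hexpr : Expr n hn w) :
    ainv n w ≤ alen n hn w := by
  obtain ⟨l, hl, hlen⟩ := alen_attained hexpr
  rw [← hlen, hl]
  exact ainv_le_length hn l

lemma alen_eq_ainv {n : ℕ} (hn : 2 ≤ n) {w : Equiv.Perm ℤ} (hw : Per n w)
    (hsum : SumOK n w) (hexpr : Expr n hn w) : alen n hn w = ainv n w :=
  le_antisymm (alen_le_ainv hn hw hsum hexpr) (ainv_le_alen hn hexpr)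

/-- If left multiplication by `s_i` increases length, then `i` is a left ascent. -/
lemma ascent_of_alen_succ {n : ℕ} (hn : 2 ≤ n) {w : Equiv.Perm ℤ} (hw : Per n w)
    (hsum : SumOK n w) (hexpr : Expr n hn w) {i : ℤ}
    (hlen : alen n hn (sRefl n hn i * w) = alen n hn w + 1) : w⁻¹ i < w⁻¹ (i+1) := by
  rcases lt_trichotomy (w⁻¹ i) (w⁻¹ (i+1)) with hlt | heq | hgt
  · exact hlt
  · exact absurd (w⁻¹.injective heq) (by omega)
  · exfalso
    have hd := ainv_descent hn hw hgt
    have hw' : Per n (sRefl n hn i * w) := per_mul (per_sRefl hn i) hw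
    have hs' : SumOK n (sRefl n hn i * w) := by
      rw [SumOK, sum_mul_sRefl hn i hw]; exact hsum
    have he' : Expr n hn (sRefl n hn i * w) := expr_mul ⟨[i], by simp [wordProd]⟩ hexpr
    have e1 := alen_eq_ainv hn hw hsum hexpr
    have e2 := alen_eq_ainv hn hw' hs' he'
    omega

/-! ### Boundary sets -/

def Bw (w : Equiv.Perm ℤ) : Set ℤ := w '' {z : ℤ | z ≤ 0}

lemma mem_Bw {w : Equiv.Perm ℤ} {z : ℤ} : z ∈ Bw w ↔ w⁻¹ z ≤ 0 := by
  constructor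
  · rintro ⟨y, hy, rfl⟩
    rwa [perm_inv_apply_self]
  · intro h
    exact ⟨w⁻¹ z, h, perm_apply_inv_self w z⟩

lemma sRefl_coe {n : ℕ} (hn : 2 ≤ n) (i : ℤ) : ⇑(sRefl n hn i) = sFun n i := rfl

lemma Bw_mul (u v : Equiv.Perm ℤ) : Bw (u * v) = ⇑u '' Bw v := by
  rw [Bw, Bw, Equiv.Perm.coe_mul, Set.image_comp]

/-- The beta-set of a partition. -/
def beta (p : YPartition) (r : ℕ) : ℤ := (p.part r : ℤ) - (r : ℤ)

def Bset (p : YPartition) : Set ℤ := Set.range (beta p)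

lemma beta_succ_lt (p : YPartition) : ∀ r, beta p (r+1) < beta p r := by
  intro r
  have := p.antitone' (show r ≤ r + 1 by omega)
  unfold beta
  push_cast
  omega

lemma beta_anti (p : YPartition) : StrictAnti (beta p) :=
  strictAnti_nat_of_succ_lt (beta_succ_lt p)

lemma mem_Bset_succ {p : YPartition} {r' : ℕ} :
    beta p (r'+1) + 1 ∈ Bset p ↔ p.part (r'+1) = p.part r' := by
  constructor
  · rintro ⟨s, hs⟩
    have h1 : beta p (r'+1) < beta p s := by omega
    have hsr : s < r'+1 := (beta_anti p).lt_iff_gt.mp h1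
    have hs' : s ≤ r' := by omega
    have h2 : beta p r' ≤ beta p s := (beta_anti p).antitone hs'
    have h3 : beta p (r'+1) < beta p r' := beta_anti p (Nat.lt_succ_self r')
    have h4 := p.antitone' (Nat.le_succ r')
    unfold beta at *
    omega
  · intro h
    exact ⟨r', by unfold beta; push_cast; omega⟩

lemma addable_iff {p : YPartition} {r : ℕ} : AddableCorner p r ↔ beta p r + 1 ∉ Bset p := by
  cases r with
  | zero =>
      constructor
      · rintro - ⟨s, hs⟩
        have h1 : beta p 0 < beta p s := by omega
        have h2 : s < 0 := (beta_anti p).lt_iff_gt.mp h1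
        omega
      · intro _
        exact Or.inl rfl
  | succ r' =>
      rw [show AddableCorner p (r'+1) ↔ p.part (r'+1) < p.part r' from ?_, mem_Bset_succ]
      · have := p.antitone' (show r' ≤ r' + 1 by omega)
        omega
      · unfold AddableCorner
        simp only [Nat.succ_ne_zero, false_or, Nat.add_sub_cancel]

/-- Flushness (the abacus condition for being an `n`-core). -/
def Flush (n : ℕ) (B : Set ℤ) : Prop := ∀ z ∈ B, z - (n:ℤ) ∈ B

lemma flush_iter {n : ℕ} {B : Set ℤ} (h : Flush n B) :
    ∀ (k : ℕ), ∀ z ∈ B, z - (n:ℤ)*(k:ℤ) ∈ B := by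
  intro k
  induction k with
  | zero => intro z hz; simpa using hz
  | succ m ih =>
      intro z hz
      have h2 := h _ (ih z hz)
      rw [show z - (n:ℤ)*(m:ℤ) - (n:ℤ) = z - (n:ℤ)*((m:ℤ)+1) by ring] at h2
      have e : ((m+1:ℕ):ℤ) = (m:ℤ)+1 := by push_cast; ring
      rw [e]
      exact h2

lemma no_removable {n : ℕ} (hn : 2 ≤ n) {p : YPartition} (hf : Flush n (Bset p)) {i : ℤ}
    (hadd : ∃ r, AddableCorner p r ∧ ((cornerContent p r - i) % (n:ℤ) = 0))
    {z : ℤ} (hz : z ∈ Bset p) (hzr : (n:ℤ) ∣ (z - i - 1)) : z - 1 ∈ Bset p := by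
  by_contra hno
  obtain ⟨r₀, hr₀, hd₀⟩ := hadd
  have hd₀' : (n:ℤ) ∣ (beta p r₀ - i) := dvd0.mp hd₀
  set y := beta p r₀ with hy_def
  have hy : y ∈ Bset p := ⟨r₀, rfl⟩
  have hy1 : y + 1 ∉ Bset p := addable_iff.mp hr₀
  have hdzy : (n:ℤ) ∣ (z - 1 - y) := by
    rw [show z - 1 - y = (z - i - 1) - (y - i) by ring]
    exact dvd_sub hzr hd₀'
  rcases hdzy with ⟨m, hm⟩
  rcases lt_trichotomy (z - 1) y with hlt | heq | hgt
  · -- y = (z-1) - n*m with m ≤ -1 ; so y - n*(-m) = z - 1 : flush from y down gives z-1 ∈ B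
    have hm1 : m ≤ -1 := by
      rcases le_or_gt m (-1) with h | h
      · exact h
      · exfalso
        have hm0 : 0 ≤ m := by omega
        have : 0 ≤ (n:ℤ)*m := mul_nonneg (by have := npos hn; omega) hm0
        omega
    have hmn : ((((-m).toNat) : ℤ)) = -m := Int.toNat_of_nonneg (by omega)
    have h7 := flush_iter hf (-m).toNat y hy
    have e1 : y - (n:ℤ)*(-m) = z - 1 := by
      have e : (n:ℤ)*(-m) = -((n:ℤ)*m) := by ring
      omega
    rw [hmn, e1] at h7
    exact hno h7
  · exact hno (heq ▸ hy)
  · -- z - n*m = y + 1 with m ≥ 1 : flush from z down gives y+1 ∈ B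
    have hm1 : 1 ≤ m := by
      rcases le_or_gt 1 m with h | h
      · exact h
      · exfalso
        have hm0 : m ≤ 0 := by omega
        have : (n:ℤ)*m ≤ 0 := mul_nonpos_of_nonneg_of_nonpos (by have := npos hn; omega) hm0
        omega
    have hmn : (((m.toNat) : ℤ)) = m := Int.toNat_of_nonneg (by omega)
    have h7 := flush_iter hf m.toNat z hz
    rw [hmn, show z - (n:ℤ)*m = y + 1 by omega] at h7
    exact hy1 h7

lemma Bset_actStep {n : ℕ} (hn : 2 ≤ n) {p q : YPartition} (hf : Flush n (Bset p))
    {i : ℤ} (hstep : ActStep n i p q) :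
    Bset q = sFun n i '' Bset p := by
  have hq : ∀ r, beta q r =
      if AddableCorner p r ∧ (cornerContent p r - i) % (n:ℤ) = 0
      then beta p r + 1 else beta p r := by
    intro r
    have h2 := hstep.2 r
    unfold beta
    split_ifs at h2 ⊢ with h
    · rw [h2]; push_cast; ring
    · rw [h2]
  have hcc : ∀ r, cornerContent p r = beta p r := fun r => rfl
  ext z
  constructor
  · rintro ⟨r, rfl⟩
    rw [hq r]
    split_ifs with hc
    · refine ⟨beta p r, ⟨r, rfl⟩, ?_⟩
      exact sFun_add (dvd0.mp hc.2)
    · by_cases h0 : (n:ℤ) ∣ (beta p r - i)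
      · have hna : ¬ AddableCorner p r := fun ha => hc ⟨ha, dvd0.mpr h0⟩
        have hz1 : beta p r + 1 ∈ Bset p := by
          by_contra hh
          exact hna (addable_iff.mpr hh)
        refine ⟨beta p r + 1, hz1, ?_⟩
        rw [sFun_sub hn (show (n:ℤ) ∣ (beta p r + 1 - i - 1) from by
          rw [show beta p r + 1 - i - 1 = beta p r - i by ring]; exact h0)]
        ring
      · by_cases h1 : (n:ℤ) ∣ (beta p r - i - 1)
        · have hz1 : beta p r - 1 ∈ Bset p := no_removable hn hf hstep.1 ⟨r, rfl⟩ h1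
          refine ⟨beta p r - 1, hz1, ?_⟩
          rw [sFun_add (show (n:ℤ) ∣ (beta p r - 1 - i) from by
            rw [show beta p r - 1 - i = beta p r - i - 1 by ring]; exact h1)]
          ring
        · exact ⟨beta p r, ⟨r, rfl⟩, sFun_fix h0 h1⟩
  · rintro ⟨y, ⟨r, rfl⟩, rfl⟩
    by_cases h0 : (n:ℤ) ∣ (beta p r - i)
    · rw [sFun_add h0]
      by_cases ha : AddableCorner p r
      · exact ⟨r, by rw [hq r, if_pos ⟨ha, dvd0.mpr h0⟩]⟩
      · have hz1 : beta p r + 1 ∈ Bset p := by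
          by_contra hh
          exact ha (addable_iff.mpr hh)
        obtain ⟨s, hs⟩ := hz1
        refine ⟨s, ?_⟩
        have hcond : ¬ (AddableCorner p s ∧ (cornerContent p s - i) % (n:ℤ) = 0) := by
          rintro ⟨-, hres⟩
          have hres' : (n:ℤ) ∣ (beta p s - i) := dvd0.mp hres
          rw [hs] at hres'
          exact not_both hn hres'
            (by rw [show beta p r + 1 - i - 1 = beta p r - i by ring]; exact h0)
        rw [hq s, if_neg hcond]
        exact hs
    · by_cases h1 : (n:ℤ) ∣ (beta p r - i - 1)
      · rw [sFun_sub hn h1]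
        have hz1 : beta p r - 1 ∈ Bset p := no_removable hn hf hstep.1 ⟨r, rfl⟩ h1
        obtain ⟨s, hs⟩ := hz1
        refine ⟨s, ?_⟩
        have hcond : ¬ (AddableCorner p s ∧ (cornerContent p s - i) % (n:ℤ) = 0) := by
          rintro ⟨hadds, -⟩
          have h5 : beta p s + 1 ∈ Bset p := by
            rw [hs, show beta p r - 1 + 1 = beta p r by ring]
            exact ⟨r, rfl⟩
          exact addable_iff.mp hadds h5
        rw [hq s, if_neg hcond]
        exact hs
      · rw [sFun_fix h0 h1]
        refine ⟨r, ?_⟩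
        have hcond : ¬ (AddableCorner p r ∧ (cornerContent p r - i) % (n:ℤ) = 0) := by
          rintro ⟨-, hres⟩
          exact h0 (dvd0.mp hres)
        rw [hq r, if_neg hcond]

lemma flush_sFun_image {n : ℕ} (hn : 2 ≤ n) {B : Set ℤ} (hf : Flush n B) (i : ℤ) :
    Flush n (sFun n i '' B) := by
  rintro z ⟨y, hy, rfl⟩
  refine ⟨y - (n:ℤ), hf y hy, ?_⟩
  have h2 := per_sFun hn i (y - (n:ℤ))
  rw [sub_add_cancel] at h2
  omega

lemma Bset_empty : Bset emptyPartition = {z : ℤ | z ≤ 0} := by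
  ext z
  constructor
  · rintro ⟨r, rfl⟩
    show beta emptyPartition r ≤ 0
    unfold beta
    show ((0:ℕ):ℤ) - (r:ℤ) ≤ 0
    omega
  · intro h
    refine ⟨(-z).toNat, ?_⟩
    show ((emptyPartition.part _ : ℕ):ℤ) - _ = z
    have : ((-z).toNat : ℤ) = -z := Int.toNat_of_nonneg (by simpa using h)
    show ((0:ℕ):ℤ) - ((-z).toNat : ℤ) = z
    omega

lemma flush_empty {n : ℕ} : Flush n {z : ℤ | z ≤ 0} := by
  intro z hz
  simp only [Set.mem_setOf_eq] at hz ⊢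
  have := npos (n := n)
  omega

lemma actList_Bset {n : ℕ} (hn : 2 ≤ n) :
    ∀ (l : List ℤ) (q : YPartition), ActList n l emptyPartition q →
      Flush n (Bset q) ∧ Bset q = ⇑(wordProd n hn l) '' {z : ℤ | z ≤ 0} := by
  intro l
  induction l with
  | nil =>
      intro q hq
      rw [show q = emptyPartition from hq, Bset_empty]
      constructor
      · intro z hz
        simp only [Set.mem_setOf_eq] at hz ⊢
        have h0 := npos hn
        omega
      · show {z : ℤ | z ≤ 0} = ⇑(1 : Equiv.Perm ℤ) '' {z : ℤ | z ≤ 0}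
        simp
  | cons i t ih =>
      rintro q ⟨p', hp', hstep⟩
      obtain ⟨hfl, hB⟩ := ih p' hp'
      have hq := Bset_actStep hn hfl hstep
      constructor
      · rw [hq]
        exact flush_sFun_image hn hfl i
      · rw [hq, hB, wordProd_cons hn, Equiv.Perm.coe_mul, Set.image_comp, sRefl_coe]

/-! ### Window permutations and the parabolic subgroup -/

lemma dvd_small_zero {n : ℕ} (hn : 2 ≤ n) {d : ℤ} (h : (n:ℤ) ∣ d)
    (h1 : -(n:ℤ) < d) (h2 : d < (n:ℤ)) : d = 0 := by
  rcases h with ⟨k, rfl⟩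
  have h0 : (0:ℤ) < (n:ℤ) := npos hn
  rcases lt_trichotomy k 0 with hk | hk | hk
  · have h5 : (n:ℤ)*k ≤ (n:ℤ)*(-1) := mul_le_mul_of_nonneg_left (by omega) (by omega)
    have h6 : (n:ℤ)*(-1) = -(n:ℤ) := by ring
    linarith
  · rw [hk]; ring
  · have h5 : (n:ℤ)*1 ≤ (n:ℤ)*k := mul_le_mul_of_nonneg_left (by omega) (by omega)
    have h6 : (n:ℤ)*1 = (n:ℤ) := by ring
    linarith

lemma sFun_window {n : ℕ} (hn : 2 ≤ n) {a p : ℤ} (ha1 : 1 ≤ a) (ha2 : a ≤ (n:ℤ) - 1)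
    (hp1 : 1 ≤ p) (hp2 : p ≤ (n:ℤ)) :
    sFun n a p = if p = a then a + 1 else if p = a + 1 then a else p := by
  split_ifs with h1 h2
  · subst h1; exact sFun_add ⟨0, by ring⟩
  · subst h2
    rw [sFun_sub hn ⟨0, by ring⟩]
    ring
  · apply sFun_fix
    · intro hd
      have := dvd_small_zero hn hd (by omega) (by omega)
      omega
    · intro hd
      have := dvd_small_zero hn hd (by omega) (by omega)
      omega

lemma sFun_sign {n : ℕ} (hn : 2 ≤ n) {a : ℤ} (ha1 : 1 ≤ a) (ha2 : a ≤ (n:ℤ)-1) (k : ℤ) :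
    k ≤ 0 ↔ sFun n a k ≤ 0 := by
  have h0 : (0:ℤ) < (n:ℤ) := npos hn
  rcases sFun_cases hn a k with ⟨d, e⟩ | ⟨d, e⟩ | ⟨d0, d1, e⟩ <;> rw [e]
  · have hk0 : k ≠ 0 := by
      rintro rfl
      have : (n:ℤ) ∣ a := (dvd_neg.mp (by simpa using d))
      have := Int.le_of_dvd (by omega) this
      omega
    have hkneg : k ≤ 0 → k ≤ -1 := by omega
    constructor
    · intro h
      -- k ≡ a mod n, k ≤ -1 : k ≤ a - n ≤ -1 so k+1 ≤ 0
      rcases d with ⟨m, hm⟩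
      have hm0 : m ≤ -1 := by
        by_contra hc
        push_neg at hc
        have hm0' : 0 ≤ m := by omega
        have : 0 ≤ (n:ℤ)*m := mul_nonneg (by omega) hm0'
        omega
      have h5 : (n:ℤ)*m ≤ (n:ℤ)*(-1) := mul_le_mul_of_nonneg_left (by omega) (by omega)
      have h6 : (n:ℤ)*(-1) = -(n:ℤ) := by ring
      omega
    · intro h; omega
  · have hk1 : k ≠ 1 := by
      rintro rfl
      have : (n:ℤ) ∣ a := dvd_neg.mp (by simpa using d)
      have := Int.le_of_dvd (by omega) this
      omega
    constructor
    · intro h; omega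
    · intro h
      omega

/-- Number of inversions within the window. -/
noncomputable def Nw (n : ℕ) (σ : Equiv.Perm ℤ) : ℕ :=
  (((Finset.Icc (1:ℤ) (n:ℤ)) ×ˢ (Finset.Icc (1:ℤ) (n:ℤ))).filter
    (fun p => p.1 < p.2 ∧ σ p.2 < σ p.1)).card

lemma sFun_window_order {n : ℕ} (hn : 2 ≤ n) {a p q : ℤ} (ha1 : 1 ≤ a) (ha2 : a ≤ (n:ℤ)-1)
    (hp1 : 1 ≤ p) (hp2 : p ≤ (n:ℤ)) (hq1 : 1 ≤ q) (hq2 : q ≤ (n:ℤ))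
    (hpq : p < q) (hne : ¬(p = a ∧ q = a+1)) : sFun n a p < sFun n a q := by
  rw [sFun_window hn ha1 ha2 hp1 hp2, sFun_window hn ha1 ha2 hq1 hq2]
  split_ifs <;> omega

lemma sFun_inj {n : ℕ} (hn : 2 ≤ n) (a : ℤ) : Function.Injective (sFun n a) :=
  (sFun_involutive n hn a).injective

lemma Nw_step {n : ℕ} (hn : 2 ≤ n) {σ : Equiv.Perm ℤ} {a : ℤ}
    (ha1 : 1 ≤ a) (ha2 : a ≤ (n:ℤ)-1) (hdesc : σ (a+1) < σ a) :
    Nw n (σ * sRefl n hn a) < Nw n σ := by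
  classical
  set W := (Finset.Icc (1:ℤ) (n:ℤ)) ×ˢ (Finset.Icc (1:ℤ) (n:ℤ)) with hW
  set F2 := W.filter (fun p => p.1 < p.2 ∧ (σ * sRefl n hn a) p.2 < (σ * sRefl n hn a) p.1) with hF2
  set F := W.filter (fun p => p.1 < p.2 ∧ σ p.2 < σ p.1) with hF
  have happly : ∀ k, (σ * sRefl n hn a) k = σ (sFun n a k) := fun k => rfl
  have haa : (a, a+1) ∈ F := by
    rw [hF, Finset.mem_filter]
    refine ⟨?_, by omega, hdesc⟩
    rw [hW, Finset.mem_product, Finset.mem_Icc, Finset.mem_Icc]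
    omega
  -- map ψ from F2 into F.erase (a, a+1)
  have hmaps : ∀ p ∈ F2, (sFun n a p.1, sFun n a p.2) ∈ F.erase (a, a+1) := by
    rintro ⟨p, q⟩ hpq
    rw [hF2, Finset.mem_filter, hW, Finset.mem_product, Finset.mem_Icc, Finset.mem_Icc] at hpq
    obtain ⟨⟨⟨hp1, hp2⟩, hq1, hq2⟩, hlt, hinv⟩ := hpq
    rw [happly, happly] at hinv
    have e1 : sFun n a a = a + 1 := by
      rw [sFun_window hn ha1 ha2 (by omega) (by omega), if_pos rfl]
    have e2 : sFun n a (a+1) = a := by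
      rw [sFun_window hn ha1 ha2 (by omega) (by omega), if_neg (by omega), if_pos rfl]
    have hnotaa : ¬(p = a ∧ q = a+1) := by
      rintro ⟨hpa, hqa⟩
      rw [hpa, hqa, e1, e2] at hinv
      omega
    have hord : sFun n a p < sFun n a q :=
      sFun_window_order hn ha1 ha2 hp1 hp2 hq1 hq2 hlt hnotaa
    have hsp : 1 ≤ sFun n a p ∧ sFun n a p ≤ (n:ℤ) := by
      rw [sFun_window hn ha1 ha2 hp1 hp2]
      split_ifs <;> omega
    have hsq : 1 ≤ sFun n a q ∧ sFun n a q ≤ (n:ℤ) := by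
      rw [sFun_window hn ha1 ha2 hq1 hq2]
      split_ifs <;> omega
    rw [Finset.mem_erase]
    constructor
    · -- image ≠ (a, a+1)
      intro heq
      rw [Prod.mk.injEq] at heq
      have hp_eq : p = a + 1 := sFun_inj hn a (by rw [heq.1]; exact e2.symm)
      have hq_eq : q = a := sFun_inj hn a (by rw [heq.2]; exact e1.symm)
      omega
    · rw [hF, Finset.mem_filter]
      refine ⟨?_, hord, hinv⟩
      rw [hW, Finset.mem_product, Finset.mem_Icc, Finset.mem_Icc]
      exact ⟨hsp, hsq⟩
  have hinj : ∀ p ∈ F2, ∀ p' ∈ F2,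
      (sFun n a p.1, sFun n a p.2) = (sFun n a p'.1, sFun n a p'.2) → p = p' := by
    rintro ⟨p, q⟩ - ⟨p', q'⟩ - heq
    rw [Prod.mk.injEq] at heq ⊢
    exact ⟨sFun_inj hn a heq.1, sFun_inj hn a heq.2⟩
  have hcard := Finset.card_le_card_of_injOn _ hmaps hinj
  have herase : (F.erase (a, a+1)).card = F.card - 1 := Finset.card_erase_of_mem haa
  have hpos : 1 ≤ F.card := Finset.card_pos.mpr ⟨_, haa⟩
  rw [Nw, Nw, ← hF, ← hF2]
  omega

lemma window_id {n : ℕ} (hn : 2 ≤ n) {σ : Equiv.Perm ℤ} (hper : Per n σ)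
    (hwin : ∀ k : ℤ, 1 ≤ k → k ≤ (n:ℤ) → 1 ≤ σ k ∧ σ k ≤ (n:ℤ))
    (hnodesc : ∀ a : ℤ, 1 ≤ a → a ≤ (n:ℤ)-1 → σ a < σ (a+1)) : σ = 1 := by
  have up : ∀ m : ℕ, (1 + (m:ℤ)) ≤ (n:ℤ) → (1 + (m:ℤ)) ≤ σ (1 + (m:ℤ)) := by
    intro m
    induction m with
    | zero =>
        intro h
        simpa using (hwin 1 (by omega) (by omega)).1
    | succ m ih =>
        intro h
        have hc : ((m+1:ℕ):ℤ) = (m:ℤ) + 1 := by push_cast; ring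
        rw [hc] at h ⊢
        have h1 := ih (by omega)
        have h2 := hnodesc (1 + (m:ℤ)) (by omega) (by omega)
        rw [show 1 + (m:ℤ) + 1 = 1 + ((m:ℤ)+1) by ring] at h2
        omega
  have down : ∀ m : ℕ, 1 ≤ (n:ℤ) - (m:ℤ) → σ ((n:ℤ) - (m:ℤ)) ≤ (n:ℤ) - (m:ℤ) := by
    intro m
    induction m with
    | zero =>
        intro h
        simpa using (hwin (n:ℤ) (by omega) (by omega)).2
    | succ m ih =>
        intro h
        have hc : ((m+1:ℕ):ℤ) = (m:ℤ) + 1 := by push_cast; ring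
        rw [hc] at h ⊢
        have h1 := ih (by omega)
        have h2 := hnodesc ((n:ℤ) - (m:ℤ) - 1) (by omega) (by omega)
        rw [show (n:ℤ) - (m:ℤ) - 1 + 1 = (n:ℤ) - (m:ℤ) by ring] at h2
        rw [show (n:ℤ) - ((m:ℤ) + 1) = (n:ℤ) - (m:ℤ) - 1 by ring]
        omega
  have hid : ∀ k : ℤ, 1 ≤ k → k ≤ (n:ℤ) → σ k = k := by
    intro k h1 h2
    have e1 : (1 + ((k-1).toNat : ℤ)) = k := by
      rw [Int.toNat_of_nonneg (by omega)]; ring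
    have hup := up (k-1).toNat (by rw [e1]; omega)
    rw [e1] at hup
    have e2 : ((n:ℤ) - (((n:ℤ)-k).toNat : ℤ)) = k := by
      rw [Int.toNat_of_nonneg (by omega)]; ring
    have hdown := down ((n:ℤ)-k).toNat (by rw [e2]; omega)
    rw [e2] at hdown
    omega
  apply Equiv.ext
  intro k
  obtain ⟨t, ht1, ht2⟩ := win_shift hn k
  have h3 := per_shift hper k t
  have h4 := hid (k + (n:ℤ)*t) ht1 ht2
  show σ k = k
  omega

lemma window_perm_mem {n : ℕ} (hn : 2 ≤ n) {σ : Equiv.Perm ℤ} (hper : Per n σ)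
    (hsign : ∀ k : ℤ, k ≤ 0 ↔ σ k ≤ 0) :
    σ ∈ Subgroup.closure
      {g : Equiv.Perm ℤ | ∃ i : ℤ, ¬ ((i : ℤ) % (n:ℤ) = 0) ∧ g = sRefl n hn i} := by
  generalize hN : Nw n σ = N
  induction N using Nat.strong_induction_on generalizing σ with
  | _ N ih =>
    have hwin : ∀ k : ℤ, 1 ≤ k → k ≤ (n:ℤ) → 1 ≤ σ k ∧ σ k ≤ (n:ℤ) := by
      intro k h1 h2
      constructor
      · have h3 := hsign k
        omega
      · have h3 := hsign (k - (n:ℤ))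
        have h4 := hper (k - (n:ℤ))
        rw [sub_add_cancel] at h4
        have h0 := npos hn
        omega
    by_cases hdesc : ∃ a : ℤ, 1 ≤ a ∧ a ≤ (n:ℤ)-1 ∧ σ (a+1) < σ a
    · obtain ⟨a, ha1, ha2, hd⟩ := hdesc
      have hmem_a : sRefl n hn a ∈
          {g : Equiv.Perm ℤ | ∃ i : ℤ, ¬ ((i : ℤ) % (n:ℤ) = 0) ∧ g = sRefl n hn i} := by
        refine ⟨a, ?_, rfl⟩
        rw [Int.emod_eq_of_lt (by omega) (by omega)]
        omega
      have hstep := Nw_step hn ha1 ha2 hd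
      have hσ₂per : Per n (σ * sRefl n hn a) := per_mul hper (per_sRefl hn a)
      have hσ₂sign : ∀ k : ℤ, k ≤ 0 ↔ (σ * sRefl n hn a) k ≤ 0 := by
        intro k
        have h1 := sFun_sign hn ha1 ha2 k
        have h2 := hsign (sFun n a k)
        exact h1.trans h2
      have hrec := ih (Nw n (σ * sRefl n hn a)) (by omega) hσ₂per hσ₂sign rfl
      have hback : σ = (σ * sRefl n hn a) * sRefl n hn a := by
        rw [mul_assoc, sRefl_sq, mul_one]
      rw [hback]
      exact mul_mem hrec (Subgroup.subset_closure hmem_a)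
    · push_neg at hdesc
      have hnod : ∀ a : ℤ, 1 ≤ a → a ≤ (n:ℤ)-1 → σ a < σ (a+1) := by
        intro a h1 h2
        have h3 := hdesc a h1 h2
        have h4 : σ a ≠ σ (a+1) := fun hh => by
          have := σ.injective hh
          omega
        omega
      rw [window_id hn hper hwin hnod]
      exact one_mem _

lemma closure_expr {n : ℕ} {hn : 2 ≤ n} {S : Set (Equiv.Perm ℤ)}
    (hS : ∀ g ∈ S, ∃ i : ℤ, g = sRefl n hn i) {g : Equiv.Perm ℤ}
    (hg : g ∈ Subgroup.closure S) : Expr n hn g := by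
  induction hg using Subgroup.closure_induction with
  | mem g hgS =>
      obtain ⟨i, rfl⟩ := hS g hgS
      exact ⟨[i], by simp [wordProd]⟩
  | one => exact expr_one hn
  | mul u v hu hv ihu ihv => exact expr_mul ihu ihv
  | inv u hu ihu => exact expr_inv ihu

/-! ### The `Good` invariant -/

lemma good_preserved {n : ℕ} (hn : 2 ≤ n) (c0 : ℤ) {B : Set ℤ}
    (h1 : c0 ∈ B) (h2 : ∀ z ∈ B, z ≤ c0) (h3 : ∀ z, (n:ℤ) ∣ (z - c0) → z ≤ c0 → z ∈ B)
    {b : ℤ} (hb1 : ¬ (n:ℤ) ∣ (b - (c0 - 1))) (hb2 : ¬ (n:ℤ) ∣ (b - c0)) :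
    c0 ∈ sFun n b '' B ∧ (∀ z ∈ sFun n b '' B, z ≤ c0) ∧
      (∀ z, (n:ℤ) ∣ (z - c0) → z ≤ c0 → z ∈ sFun n b '' B) := by
  have fixline : ∀ z : ℤ, (n:ℤ) ∣ (z - c0) → sFun n b z = z := by
    intro z hz
    apply sFun_fix
    · intro hd
      apply hb2
      rw [show b - c0 = -((z - b) - (z - c0)) by ring]
      exact dvd_neg.mpr (dvd_sub hd hz)
    · intro hd
      apply hb1
      rw [show b - (c0 - 1) = -((z - b - 1) - (z - c0)) by ring]
      exact dvd_neg.mpr (dvd_sub hd hz)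
  refine ⟨⟨c0, h1, fixline c0 ⟨0, by ring⟩⟩, ?_, ?_⟩
  · rintro _ ⟨y, hy, rfl⟩
    have hyc := h2 y hy
    rcases sFun_cases hn b y with ⟨d, e⟩ | ⟨d, e⟩ | ⟨d0, d1, e⟩ <;> rw [e]
    · -- y ↦ y + 1 : y ≠ c0 since c0 is fixed (residue), so y + 1 ≤ c0
      have : y ≠ c0 := by
        rintro rfl
        exact hb2 (dvd_neg.mp (by rw [neg_sub]; exact d))
      omega
    · omega
    · omega
  · intro z hz hzc
    exact ⟨z, h3 z hz hzc, fixline z hz⟩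

lemma good_word {n : ℕ} (hn : 2 ≤ n) (c0 : ℤ) {B : Set ℤ}
    (h1 : c0 ∈ B) (h2 : ∀ z ∈ B, z ≤ c0) (h3 : ∀ z, (n:ℤ) ∣ (z - c0) → z ≤ c0 → z ∈ B)
    (t : List ℤ) (ht : ∀ b ∈ t, ¬ (n:ℤ) ∣ (b - (c0-1)) ∧ ¬ (n:ℤ) ∣ (b - c0)) :
    c0 ∈ ⇑(wordProd n hn t) '' B ∧ (∀ z ∈ ⇑(wordProd n hn t) '' B, z ≤ c0) ∧
      (∀ z, (n:ℤ) ∣ (z - c0) → z ≤ c0 → z ∈ ⇑(wordProd n hn t) '' B) := by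
  induction t with
  | nil =>
      have he : ⇑(wordProd n hn []) '' B = B := by
        show ⇑(1 : Equiv.Perm ℤ) '' B = B
        simp
      rw [he]
      exact ⟨h1, h2, h3⟩
  | cons b t ih =>
      have hbt : ∀ b' ∈ t, ¬ (n:ℤ) ∣ (b' - (c0-1)) ∧ ¬ (n:ℤ) ∣ (b' - c0) :=
        fun b' hb' => ht b' (List.mem_cons_of_mem b hb')
      obtain ⟨g1, g2, g3⟩ := ih hbt
      have he : ⇑(wordProd n hn (b :: t)) '' B = sFun n b '' (⇑(wordProd n hn t) '' B) := by
        rw [wordProd_cons hn, Equiv.Perm.coe_mul, Set.image_comp, sRefl_coe]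
      rw [he]
      exact good_preserved hn c0 g1 g2 g3 (ht b List.mem_cons_self).1
        (ht b List.mem_cons_self).2

end AuxCD

open AuxCD

/-- If `u w_λ⁻¹` is cyclically decreasing with `ℓ(u w_λ⁻¹) = ℓ(u) - ℓ(w_λ)`,
then `u w_λ⁻¹` lies in the subgroup generated by the simple reflections other than `s_x`,
where `x = λ₁ - 1 (mod n)`. -/
theorem cyclically_decreasing_mem_parabolic
    (n : ℕ) (hn : 2 ≤ n) (lam : YPartition) (hcore : IsCore n lam)
    (wl u : Equiv.Perm ℤ)
    (hwl : IsAffGrassmannian n hn wl) (hal : ACoreOf n hn wl lam)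
    (hu : IsAffGrassmannian n hn u)
    (hcd : IsCyclicallyDecreasing n hn (u * wl⁻¹))
    (hlen : alen n hn (u * wl⁻¹) + alen n hn wl = alen n hn u) :
    u * wl⁻¹ ∈ Subgroup.closure
      {g : Equiv.Perm ℤ | ∃ i : ℤ,
        ¬ ((i - ((lam.part 0 : ℤ) - 1)) % (n : ℤ) = 0) ∧ g = sRefl n hn i} := by
  classical
  obtain ⟨l, hlred, hlcd⟩ := hcd
  obtain ⟨hlprod, hllen⟩ := hlred
  obtain ⟨l₀, hl₀red, hl₀act⟩ := hal
  obtain ⟨hl₀prod, hl₀len⟩ := hl₀red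
  have hufull : u = wordProd n hn (l ++ l₀) := by
    rw [wordProd_append hn, ← hlprod, ← hl₀prod]
    group
  have halenu : alen n hn u = (l ++ l₀).length := by
    rw [List.length_append]
    omega
  have hsuffix : ∀ l₁' l₂' : List ℤ, l ++ l₀ = l₁' ++ l₂' →
      alen n hn (wordProd n hn l₂') = l₂'.length := by
    intro l₁' l₂' hsp
    have h1 : alen n hn (wordProd n hn l₂') ≤ l₂'.length := alen_le rfl
    rcases Nat.lt_or_ge (alen n hn (wordProd n hn l₂')) l₂'.length with h2 | h2
    · exfalso
      obtain ⟨t, ht, htlen⟩ := alen_attained (w := wordProd n hn l₂') ⟨l₂', rfl⟩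
      have h3 : u = wordProd n hn (l₁' ++ t) := by
        rw [wordProd_append hn, ← ht, ← wordProd_append hn, ← hsp, ← hufull]
      have h4 := alen_le h3
      rw [List.length_append] at h4
      have h5 : (l ++ l₀).length = l₁'.length + l₂'.length := by
        rw [hsp, List.length_append]
      omega
    · omega
  have hgrass : ∀ l₁' l₂' : List ℤ, l ++ l₀ = l₁' ++ l₂' →
      ∀ g ∈ Subgroup.closure
        {g : Equiv.Perm ℤ | ∃ i : ℤ, ¬ ((i : ℤ) % (n:ℤ) = 0) ∧ g = sRefl n hn i},
        alen n hn (wordProd n hn l₂') ≤ alen n hn (wordProd n hn l₂' * g) := by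
    intro l₁' l₂' hsp g hg
    by_contra hlt
    push_neg at hlt
    have hgexpr : Expr n hn g :=
      closure_expr (fun g' hg' => ⟨hg'.choose, hg'.choose_spec.2⟩) hg
    have h3 : u * g = wordProd n hn l₁' * (wordProd n hn l₂' * g) := by
      rw [hufull, hsp, wordProd_append hn, mul_assoc]
    have h4 : alen n hn (u * g) ≤ l₁'.length + alen n hn (wordProd n hn l₂' * g) := by
      have h5 : alen n hn (u * g) ≤
          alen n hn (wordProd n hn l₁') + alen n hn (wordProd n hn l₂' * g) := by
        rw [h3]
        exact alen_mul_le ⟨l₁', rfl⟩ (expr_mul ⟨l₂', rfl⟩ hgexpr)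
      have h6 : alen n hn (wordProd n hn l₁') ≤ l₁'.length := alen_le rfl
      omega
    have h5 := hu.2 g hg
    have h6 := hsuffix l₁' l₂' hsp
    have h7 : (l ++ l₀).length = l₁'.length + l₂'.length := by
      rw [hsp, List.length_append]
    omega
  have hflush := (actList_Bset hn l₀ lam hl₀act).1
  have hBlam := (actList_Bset hn l₀ lam hl₀act).2
  set c0 : ℤ := (lam.part 0 : ℤ) with hc0def
  have hc0mem : c0 ∈ Bset lam := ⟨0, by unfold beta; rw [hc0def]; simp⟩
  have hbound : ∀ z ∈ Bset lam, z ≤ c0 := by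
    rintro z ⟨r, rfl⟩
    have h1 := (beta_anti lam).antitone (Nat.zero_le r)
    have h2 : beta lam 0 = c0 := by unfold beta; rw [hc0def]; simp
    omega
  have hray : ∀ z : ℤ, (n:ℤ) ∣ (z - c0) → z ≤ c0 → z ∈ Bset lam := by
    intro z hd hz
    obtain ⟨m, hm⟩ := hd
    have h0 := npos hn
    have hm0 : m ≤ 0 := by
      by_contra hc
      push_neg at hc
      have h5 : (n:ℤ)*1 ≤ (n:ℤ)*m := mul_le_mul_of_nonneg_left (by omega) (by omega)
      have h6 : (n:ℤ)*1 = (n:ℤ) := by ring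
      omega
    have hmn : (((-m).toNat : ℤ)) = -m := Int.toNat_of_nonneg (by omega)
    have h7 := flush_iter hflush (-m).toNat c0 hc0mem
    rw [hmn] at h7
    have e2 : (n:ℤ)*(-m) = -((n:ℤ)*m) := by ring
    have e : c0 - (n:ℤ)*(-m) = z := by omega
    rw [e] at h7
    exact h7
  have hkey : ∀ j ∈ l, ¬ ((j - (c0 - 1)) % (n:ℤ) = 0) := by
    intro j hjl hjmod
    have hjdvd : (n:ℤ) ∣ (j - (c0 - 1)) := dvd0.mp hjmod
    obtain ⟨l₁, l₂, hsplit⟩ := List.append_of_mem hjl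
    have hsplit2 : l ++ l₀ = l₁ ++ (j :: (l₂ ++ l₀)) := by rw [hsplit]; simp
    have hsplit1 : l ++ l₀ = (l₁ ++ [j]) ++ (l₂ ++ l₀) := by rw [hsplit]; simp
    set v := wordProd n hn (l₂ ++ l₀) with hvdef
    set v' := wordProd n hn (j :: (l₂ ++ l₀)) with hv'def
    have hv'cons : v' = sRefl n hn j * v := wordProd_cons hn j (l₂ ++ l₀)
    have halv : alen n hn v = (l₂ ++ l₀).length := by
      have h := hsuffix _ _ hsplit1
      rw [← hvdef] at h
      exact h
    have halv' : alen n hn v' = (l₂ ++ l₀).length + 1 := by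
      have h := hsuffix _ _ hsplit2
      rw [← hv'def] at h
      rw [h, List.length_cons]
    have hpw : (l₁ ++ j :: l₂).Pairwise
        (fun a b : ℤ => ¬ ((a - b) % (n : ℤ) = 0) ∧ ¬ ((b - (a + 1)) % (n : ℤ) = 0)) := by
      have h := hlcd
      rw [hsplit] at h
      exact h
    have hj2 : ∀ b ∈ l₂, ¬ ((j - b) % (n:ℤ) = 0) ∧ ¬ ((b - (j + 1)) % (n:ℤ) = 0) :=
      (List.pairwise_cons.mp (List.pairwise_append.mp hpw).2.1).1
    have hletters : ∀ b ∈ l₂, ¬ (n:ℤ) ∣ (b - (c0 - 1)) ∧ ¬ (n:ℤ) ∣ (b - c0) := by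
      intro b hb
      obtain ⟨hb1, hb2⟩ := hj2 b hb
      constructor
      · intro hd
        apply hb1
        apply dvd0.mpr
        rw [show j - b = (j - (c0-1)) - (b - (c0-1)) by ring]
        exact dvd_sub hjdvd hd
      · intro hd
        apply hb2
        apply dvd0.mpr
        rw [show b - (j+1) = (b - c0) - (j - (c0-1)) by ring]
        exact dvd_sub hd hjdvd
    have hBv : Bw v = ⇑(wordProd n hn l₂) '' Bset lam := by
      rw [hvdef, wordProd_append hn, Bw_mul,
        show Bw (wordProd n hn l₀) = Bset lam from hBlam.symm]
    obtain ⟨hg1, hg2, hg3⟩ := good_word hn c0 hc0mem hbound hray l₂ hletters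
    rw [← hBv] at hg1 hg2 hg3
    have hvper : Per n v := per_wordProd hn _
    have hv'per : Per n v' := per_wordProd hn _
    have hvsum : SumOK n v := sumOK_wordProd hn _
    have hv'sum : SumOK n v' := sumOK_wordProd hn _
    have hvexpr : Expr n hn v := ⟨_, hvdef⟩
    have hv'expr : Expr n hn v' := ⟨_, hv'def⟩
    by_cases hA : ∃ z : ℤ, (n:ℤ) ∣ (z - (c0 - 1)) ∧ z ∉ Bw v ∧ z + 1 ∈ Bw v
    · obtain ⟨z, hz1, hz2, hz3⟩ := hA
      have hvz : ¬ v⁻¹ z ≤ 0 := fun h => hz2 (mem_Bw.mpr h)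
      have hvz1 : v⁻¹ (z+1) ≤ 0 := mem_Bw.mp hz3
      obtain ⟨s, hs⟩ : (n:ℤ) ∣ (z - j) := by
        rw [show z - j = (z - (c0-1)) - (j - (c0-1)) by ring]
        exact dvd_sub hz1 hjdvd
      have hiv := per_shift (per_inv hvper) j s
      have hiv1 := per_shift (per_inv hvper) (j+1) s
      rw [show j + (n:ℤ)*s = z by omega] at hiv
      rw [show j + 1 + (n:ℤ)*s = z + 1 by omega] at hiv1
      have hdesc : v⁻¹ (j+1) < v⁻¹ j := by omega
      have hd := ainv_descent hn hvper hdesc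
      rw [← hv'cons] at hd
      have e1 := alen_eq_ainv hn hvper hvsum hvexpr
      have e2 := alen_eq_ainv hn hv'per hv'sum hv'expr
      omega
    · push_neg at hA
      have hiff : ∀ z : ℤ, (n:ℤ) ∣ (z - j) → (z ∈ Bw v ↔ z + 1 ∈ Bw v) := by
        intro z hzj
        have hzx : (n:ℤ) ∣ (z - (c0-1)) := by
          rw [show z - (c0-1) = (z - j) + (j - (c0-1)) by ring]
          exact dvd_add hzj hjdvd
        constructor
        · intro hzB
          have hzle := hg2 z hzB
          have hznec0 : z ≠ c0 := by
            rintro rfl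
            have h8 : (n:ℤ) ∣ (1:ℤ) := by
              have h9 := hzx
              rw [show c0 - (c0 - 1) = 1 by ring] at h9
              exact h9
            have h10 := Int.le_of_dvd one_pos h8
            have h11 := npos hn
            omega
          apply hg3 (z+1)
          · rw [show z + 1 - c0 = z - (c0-1) by ring]
            exact hzx
          · omega
        · intro hz1B
          by_contra hzB
          exact hA z hzx hzB hz1B
      have hfix : sFun n j '' Bw v = Bw v := by
        apply Set.Subset.antisymm
        · rintro _ ⟨y, hy, rfl⟩
          rcases sFun_cases hn j y with ⟨d, e⟩ | ⟨d, e⟩ | ⟨d0, d1, e⟩ <;> rw [e]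
          · exact (hiff y d).mp hy
          · have h12 := (hiff (y-1) (by rw [show y - 1 - j = y - j - 1 by ring]; exact d)).mpr
            rw [show y - 1 + 1 = y by ring] at h12
            exact h12 hy
          · exact hy
        · intro z hz
          rcases sFun_cases hn j z with ⟨d, e⟩ | ⟨d, e⟩ | ⟨d0, d1, e⟩
          · refine ⟨z + 1, (hiff z d).mp hz, ?_⟩
            rw [sFun_sub hn (show (n:ℤ) ∣ (z + 1 - j - 1) from by
              rw [show z + 1 - j - 1 = z - j by ring]; exact d)]
            ring
          · refine ⟨z - 1, ?_, ?_⟩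
            · have h12 := (hiff (z-1) (by rw [show z - 1 - j = z - j - 1 by ring]; exact d)).mpr
              rw [show z - 1 + 1 = z by ring] at h12
              exact h12 hz
            · rw [sFun_add (show (n:ℤ) ∣ (z - 1 - j) from by
                rw [show z - 1 - j = z - j - 1 by ring]; exact d)]
              ring
          · exact ⟨z, hz, e⟩
      have hBv'B : Bw v' = Bw v := by
        rw [hv'cons, Bw_mul, sRefl_coe, hfix]
      set σ := v⁻¹ * v' with hσdef
      have hσper : Per n σ := per_mul (per_inv hvper) hv'per
      have hσsign : ∀ k : ℤ, k ≤ 0 ↔ σ k ≤ 0 := by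
        intro k
        have h1 : v' k ∈ Bw v' ↔ k ≤ 0 := by
          rw [mem_Bw, perm_inv_apply_self]
        constructor
        · intro hk
          exact mem_Bw.mp (hBv'B ▸ (h1.mpr hk))
        · intro hk
          have h13 : v' k ∈ Bw v := mem_Bw.mpr hk
          rw [← hBv'B] at h13
          exact h1.mp h13
      have hσmem := window_perm_mem hn hσper hσsign
      have hveq : v' * σ⁻¹ = v := by
        rw [hσdef]
        group
      have hgr := hgrass l₁ (j :: (l₂ ++ l₀)) hsplit2 σ⁻¹ (inv_mem hσmem)
      rw [← hv'def, hveq] at hgr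
      omega
  rw [hlprod]
  show (l.map (sRefl n hn)).prod ∈ _
  apply list_prod_mem
  intro g hg
  rw [List.mem_map] at hg
  obtain ⟨j, hjl, rfl⟩ := hg
  exact Subgroup.subset_closure ⟨j, hkey j hjl, rfl⟩
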